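/- Let G = (V, E) be a finite simple graph, let x* be an LP-optimal half-integral point of the vertex-cover LP of G, and let v ∈ V be a vertex such that every LP-optimal point x satisfies 0 < x_v < 1. Then for each b ∈ {0,1} there exists a point x̂ that is LP-feasible with x̂_v = b, has minimal LP value among all LP-feasible points x with x_v = b, and agrees with x* on all integer coordinates of x*: x̂_u = x*_u for every u ∈ V with x*_u ∈ {0,1}. (Theorem 6: the maximal set of integer variables is inherited by both child nodes after branching on a variable outside it.) -/

import Mathlib

def LPFeasible {V : Type*} [Fintype V] (G : SimpleGraph V) (x : V → ℝ) : Prop :=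
  (∀ v, 0 ≤ x v ∧ x v ≤ 1) ∧ ∀ u v, G.Adj u v → 1 ≤ x u + x v

noncomputable def LPValue {V : Type*} [Fintype V] (x : V → ℝ) : ℝ := ∑ v, x v

def LPOptimal {V : Type*} [Fintype V] (G : SimpleGraph V) (x : V → ℝ) : Prop :=
  LPFeasible G x ∧ ∀ y : V → ℝ, LPFeasible G y → LPValue x ≤ LPValue y

def HalfIntegral {V : Type*} (x : V → ℝ) : Prop :=
  ∀ v, x v = 0 ∨ x v = 1/2 ∨ x v = 1

def IsVertexCover {V : Type*} [Fintype V] (G : SimpleGraph V) (C : Finset V) : Prop :=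
  ∀ u v, G.Adj u v → u ∈ C ∨ v ∈ C

/-- Theorem 6: after branching on a variable fractional in every LP-optimal solution,
each child node has an optimal solution agreeing with the integer coordinates of x*. -/
theorem nt_monotone {V : Type*} [Fintype V] (G : SimpleGraph V)
    (xstar : V → ℝ) (hx : LPOptimal G xstar) (hxh : HalfIntegral xstar)
    (v : V) (hv : ∀ x : V → ℝ, LPOptimal G x → 0 < x v ∧ x v < 1) :
    ∀ b : ℝ, b = 0 ∨ b = 1 →
      ∃ xhat : V → ℝ, LPFeasible G xhat ∧ xhat v = b ∧
        (∀ x : V → ℝ, LPFeasible G x → x v = b → LPValue xhat ≤ LPValue x) ∧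
        (∀ u, (xstar u = 0 ∨ xstar u = 1) → xhat u = xstar u) := by
  classical
  intro b hb
  have hb0 : (0:ℝ) ≤ b := by rcases hb with h | h <;> simp [h]
  have hb1 : b ≤ 1 := by rcases hb with h | h <;> simp [h]
  obtain ⟨⟨hxbd, hxe⟩, hxopt⟩ := hx
  -- the branch-feasible set
  set S : Set (V → ℝ) := {z | LPFeasible G z ∧ z v = b} with hSdef
  have hz0 : (fun u => if u = v then b else (1:ℝ)) ∈ S := by
    refine ⟨⟨fun u => ?_, fun u w h => ?_⟩, by simp⟩
    · by_cases h : u = v <;> simp [h, hb0, hb1]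
    · by_cases h1 : u = v
      · by_cases h2 : w = v
        · exact absurd (h1 ▸ h2 ▸ h) (G.irrefl)
        · simp [h1, h2]; linarith
      · by_cases h2 : w = v <;> simp [h1, h2] <;> linarith
  have hclosed : IsClosed S := by
    have h1 : S = (⋂ u, {z : V → ℝ | z u ∈ Set.Icc (0:ℝ) 1}) ∩
        ((⋂ u, ⋂ w, ⋂ _h : G.Adj u w, {z : V → ℝ | 1 ≤ z u + z w}) ∩ {z | z v = b}) := by
      ext z
      simp only [hSdef, Set.mem_setOf_eq, Set.mem_inter_iff, Set.mem_iInter, Set.mem_Icc,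
        LPFeasible]
      tauto
    rw [h1]
    refine IsClosed.inter (isClosed_iInter fun u => IsClosed.preimage (continuous_apply u)
      isClosed_Icc) (IsClosed.inter ?_ ?_)
    · exact isClosed_iInter fun u => isClosed_iInter fun w => isClosed_iInter fun _ =>
        isClosed_le continuous_const ((continuous_apply u).add (continuous_apply w))
    · exact isClosed_eq (continuous_apply v) continuous_const
  have hsub : S ⊆ Set.pi Set.univ fun _ : V => Set.Icc (0:ℝ) 1 := by
    intro z hz u _
    exact ⟨(hz.1.1 u).1, (hz.1.1 u).2⟩
  have hcomp : IsCompact S :=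
    IsCompact.of_isClosed_subset (isCompact_univ_pi fun _ => isCompact_Icc) hclosed hsub
  have hcont : ContinuousOn (LPValue (V := V)) S := by
    have : Continuous (fun x : V → ℝ => ∑ u, x u) :=
      continuous_finset_sum Finset.univ fun i _ => continuous_apply i
    exact this.continuousOn
  obtain ⟨y, hyS, hymin⟩ := hcomp.exists_isMinOn ⟨_, hz0⟩ hcont
  obtain ⟨⟨hybd, hye⟩, hyv⟩ := hyS
  have hvfrac := hv xstar ⟨⟨hxbd, hxe⟩, hxopt⟩
  have hvI : ¬ (xstar v = 0 ∨ xstar v = 1) := by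
    rintro (h | h) <;> rw [h] at hvfrac <;> [exact lt_irrefl _ hvfrac.1; exact lt_irrefl _ hvfrac.2]
  -- on an edge from an integral vertex to a fractional one, the integral endpoint is 1
  have key : ∀ u w, G.Adj u w → (xstar u = 0 ∨ xstar u = 1) →
      ¬(xstar w = 0 ∨ xstar w = 1) → xstar u = 1 := by
    intro u w hadj hu hw
    rcases hu with h0 | h1
    · exfalso
      have h := hxe u w hadj
      have hw1 := (hxbd w).2
      apply hw
      right
      linarith
    · exact h1
  -- fractional vertices of xstar have value 1/2
  have half : ∀ w, ¬(xstar w = 0 ∨ xstar w = 1) → xstar w = 1/2 := by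
    intro w hw
    rcases hxh w with h | h | h
    · exact absurd (Or.inl h) hw
    · exact h
    · exact absurd (Or.inr h) hw
  set xhat : V → ℝ := fun u => if xstar u = 0 ∨ xstar u = 1 then xstar u else y u with hxhatdef
  have hhatbd : ∀ u, 0 ≤ xhat u ∧ xhat u ≤ 1 := by
    intro u
    by_cases h : xstar u = 0 ∨ xstar u = 1
    · simp only [hxhatdef, if_pos h]; exact hxbd u
    · simp only [hxhatdef, if_neg h]; exact hybd u
  have hhatfeas : LPFeasible G xhat := by
    refine ⟨hhatbd, fun u w hadj => ?_⟩
    by_cases hu : xstar u = 0 ∨ xstar u = 1 <;> by_cases hw : xstar w = 0 ∨ xstar w = 1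
    · simp only [hxhatdef, if_pos hu, if_pos hw]; exact hxe u w hadj
    · simp only [hxhatdef, if_pos hu, if_neg hw]
      rw [key u w hadj hu hw]
      have := (hybd w).1
      linarith
    · simp only [hxhatdef, if_neg hu, if_pos hw]
      rw [key w u hadj.symm hw hu]
      have := (hybd u).1
      linarith
    · simp only [hxhatdef, if_neg hu, if_neg hw]; exact hye u w hadj
  -- the "half-swap" point used for the persistency argument
  set x' : V → ℝ := fun u => if xstar u = 0 ∨ xstar u = 1 then (xstar u + y u)/2 else xstar u
    with hx'def
  have hx'feas : LPFeasible G x' := by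
    constructor
    · intro u
      by_cases h : xstar u = 0 ∨ xstar u = 1
      · simp only [hx'def, if_pos h]
        have h1 := hxbd u; have h2 := hybd u
        constructor <;> [linarith [h1.1, h2.1]; linarith [h1.2, h2.2]]
      · simp only [hx'def, if_neg h]; exact hxbd u
    · intro u w hadj
      by_cases hu : xstar u = 0 ∨ xstar u = 1 <;> by_cases hw : xstar w = 0 ∨ xstar w = 1
      · simp only [hx'def, if_pos hu, if_pos hw]
        have h1 := hxe u w hadj
        have h2 := hye u w hadj
        linarith
      · simp only [hx'def, if_pos hu, if_neg hw]
        rw [key u w hadj hu hw, half w hw]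
        have := (hybd u).1
        linarith
      · simp only [hx'def, if_neg hu, if_pos hw]
        rw [key w u hadj.symm hw hu, half u hu]
        have := (hybd w).1
        linarith
      · simp only [hx'def, if_neg hu, if_neg hw]; exact hxe u w hadj
  have hle : LPValue xstar ≤ LPValue x' := hxopt x' hx'feas
  -- persistency: LPValue xhat ≤ LPValue y
  have hsum1 : LPValue x' - LPValue xstar =
      ∑ u, (if xstar u = 0 ∨ xstar u = 1 then (y u - xstar u)/2 else 0) := by
    simp only [LPValue, ← Finset.sum_sub_distrib]
    refine Finset.sum_congr rfl fun u _ => ?_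
    by_cases h : xstar u = 0 ∨ xstar u = 1
    · simp only [hx'def, if_pos h]; ring
    · simp only [hx'def, if_neg h]; ring
  have hsum2 : LPValue y - LPValue xhat =
      ∑ u, (if xstar u = 0 ∨ xstar u = 1 then y u - xstar u else 0) := by
    simp only [LPValue, ← Finset.sum_sub_distrib]
    refine Finset.sum_congr rfl fun u _ => ?_
    by_cases h : xstar u = 0 ∨ xstar u = 1
    · simp only [hxhatdef, if_pos h]
    · simp only [hxhatdef, if_neg h]; ring
  have htwice : (∑ u, (if xstar u = 0 ∨ xstar u = 1 then y u - xstar u else 0)) =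
      2 * ∑ u, (if xstar u = 0 ∨ xstar u = 1 then (y u - xstar u)/2 else 0) := by
    rw [Finset.mul_sum]
    refine Finset.sum_congr rfl fun u _ => ?_
    by_cases h : xstar u = 0 ∨ xstar u = 1 <;> simp [h] <;> ring
  have hxhaty : LPValue xhat ≤ LPValue y := by linarith [hle, hsum1, hsum2, htwice]
  refine ⟨xhat, hhatfeas, ?_, ?_, ?_⟩
  · simp only [hxhatdef, if_neg hvI]; exact hyv
  · intro z hz hzv
    have hz' : z ∈ S := ⟨hz, hzv⟩
    exact le_trans hxhaty ((isMinOn_iff.mp hymin) z hz')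
  · intro u hu
    simp only [hxhatdef, if_pos hu]
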